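/- arXiv:1407.3961 — 5 statements merged into one kernel-verified Lean document; each statement's English description precedes it below -/
import Mathlib

section
/- (Theorem 1.) Let (X, μ) be a measure space and let g, f : X → [0,∞) be measurable with ∫ g dμ = ∫ f dμ = 1 and with f > 0 and g > 0 μ-almost everywhere. Let β > 0 and γ ∈ ℝ, set A = 1 + γ(1−β) and B = β − γ(1−β), and assume A ≠ 0 and B ≠ 0. If the three integrals ∫ f^{1+β} dμ, ∫ g^{1+β} dμ and ∫ f^B g^A dμ are all finite and strictly positive, then LSD_{β,γ}(g,f) = (1/A)·log(∫ f^{1+β} dμ) − ((1+β)/(A·B))·log(∫ f^B g^A dμ) + (1/B)·log(∫ g^{1+β} dμ) ≥ 0. -/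
open MeasureTheory
open scoped ENNReal NNReal

lemma aux_log_le {M F G : ℝ≥0∞} {s t : ℝ}
    (hM0 : M ≠ 0) (hMt : M ≠ ⊤)
    (hF0 : F ≠ 0) (hFt : F ≠ ⊤) (hG0 : G ≠ 0) (hGt : G ≠ ⊤)
    (hs : 0 ≤ s) (ht : 0 ≤ t)
    (h : M ≤ F ^ s * G ^ t) :
    Real.log M.toReal ≤ s * Real.log F.toReal + t * Real.log G.toReal := by
  have hFpos : 0 < F.toReal := ENNReal.toReal_pos hF0 hFt
  have hGpos : 0 < G.toReal := ENNReal.toReal_pos hG0 hGt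
  have hMpos : 0 < M.toReal := ENNReal.toReal_pos hM0 hMt
  have hFs : F ^ s ≠ ⊤ := ENNReal.rpow_ne_top_of_nonneg hs hFt
  have hGt' : G ^ t ≠ ⊤ := ENNReal.rpow_ne_top_of_nonneg ht hGt
  have h' : M.toReal ≤ F.toReal ^ s * G.toReal ^ t := by
    have := ENNReal.toReal_mono (ENNReal.mul_ne_top hFs hGt') h
    rwa [ENNReal.toReal_mul, ← ENNReal.toReal_rpow, ← ENNReal.toReal_rpow] at this
  calc Real.log M.toReal ≤ Real.log (F.toReal ^ s * G.toReal ^ t) :=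
        Real.log_le_log hMpos h'
    _ = s * Real.log F.toReal + t * Real.log G.toReal := by
        rw [Real.log_mul (by positivity) (by positivity), Real.log_rpow hFpos,
          Real.log_rpow hGpos]

/-- The logarithmic S-divergence `LSD_{β,γ}(g,f)` with `A = 1 + γ(1−β)`,
`B = β − γ(1−β)`. -/
noncomputable def LSD {X : Type*} [MeasurableSpace X] (μ : Measure X) (β A B : ℝ)
    (g f : X → ℝ≥0) : ℝ :=
  (1 / A) * Real.log (∫⁻ x, (f x : ℝ≥0∞) ^ (1 + β) ∂μ).toReal -
    ((1 + β) / (A * B)) *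
      Real.log (∫⁻ x, (f x : ℝ≥0∞) ^ B * (g x : ℝ≥0∞) ^ A ∂μ).toReal +
    (1 / B) * Real.log (∫⁻ x, (g x : ℝ≥0∞) ^ (1 + β) ∂μ).toReal

/-- Theorem 1: the logarithmic S-divergence is nonnegative. -/
theorem lsd_nonneg {X : Type*} [MeasurableSpace X] (μ : Measure X)
    (g f : X → ℝ≥0) (hg : Measurable g) (hf : Measurable f)
    (hg1 : ∫⁻ x, (g x : ℝ≥0∞) ∂μ = 1) (hf1 : ∫⁻ x, (f x : ℝ≥0∞) ∂μ = 1)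
    (hfpos : ∀ᵐ x ∂μ, 0 < f x) (hgpos : ∀ᵐ x ∂μ, 0 < g x)
    (β γ A B : ℝ) (hβ : 0 < β)
    (hA : A = 1 + γ * (1 - β)) (hB : B = β - γ * (1 - β))
    (hA0 : A ≠ 0) (hB0 : B ≠ 0)
    (hfint : 0 < ∫⁻ x, (f x : ℝ≥0∞) ^ (1 + β) ∂μ)
    (hfint' : ∫⁻ x, (f x : ℝ≥0∞) ^ (1 + β) ∂μ < ∞)
    (hgint : 0 < ∫⁻ x, (g x : ℝ≥0∞) ^ (1 + β) ∂μ)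
    (hgint' : ∫⁻ x, (g x : ℝ≥0∞) ^ (1 + β) ∂μ < ∞)
    (hfg : 0 < ∫⁻ x, (f x : ℝ≥0∞) ^ B * (g x : ℝ≥0∞) ^ A ∂μ)
    (hfg' : ∫⁻ x, (f x : ℝ≥0∞) ^ B * (g x : ℝ≥0∞) ^ A ∂μ < ∞) :
    0 ≤ LSD μ β A B g f := by
  have hAB : A + B = 1 + β := by rw [hA, hB]; ring
  have hβ1 : (0:ℝ) < 1 + β := by linarith
  have hβ1' : (1 + β : ℝ) ≠ 0 := ne_of_gt hβ1
  set F := ∫⁻ x, (f x : ℝ≥0∞) ^ (1 + β) ∂μ with hFdef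
  set G := ∫⁻ x, (g x : ℝ≥0∞) ^ (1 + β) ∂μ with hGdef
  set M := ∫⁻ x, (f x : ℝ≥0∞) ^ B * (g x : ℝ≥0∞) ^ A ∂μ with hMdef
  set lF := Real.log F.toReal with hlF
  set lG := Real.log G.toReal with hlG
  set lM := Real.log M.toReal with hlM
  have hfm : Measurable fun x => (f x : ℝ≥0∞) := hf.coe_nnreal_ennreal
  have hgm : Measurable fun x => (g x : ℝ≥0∞) := hg.coe_nnreal_ennreal
  -- key inequalities
  have key : (0 < A ∧ 0 < B → (1 + β) * lM ≤ B * lF + A * lG) ∧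
      (A < 0 ∨ B < 0 → B * lF + A * lG ≤ (1 + β) * lM) := by
    constructor
    · rintro ⟨hApos, hBpos⟩
      have hpq : ((1 + β) / B).HolderConjugate ((1 + β) / A) := by
        rw [Real.holderConjugate_iff]; constructor
        · rw [lt_div_iff₀ hBpos]; linarith
        · rw [inv_div, inv_div, ← add_div, show B + A = 1 + β by linarith,
            div_self hβ1']
      have h1 := ENNReal.lintegral_mul_le_Lp_mul_Lq μ hpq
        ((hfm.pow_const B).aemeasurable) ((hgm.pow_const A).aemeasurable)
      simp only [Pi.mul_apply, ← ENNReal.rpow_mul] at h1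
      rw [show B * ((1 + β) / B) = 1 + β by field_simp,
        show A * ((1 + β) / A) = 1 + β by field_simp,
        one_div_div, one_div_div] at h1
      have hlog := aux_log_le (ne_of_gt hfg) (ne_of_lt hfg') (ne_of_gt hfint)
        (ne_of_lt hfint') (ne_of_gt hgint) (ne_of_lt hgint')
        (div_nonneg hBpos.le hβ1.le) (div_nonneg hApos.le hβ1.le) h1
      have := mul_le_mul_of_nonneg_left hlog (le_of_lt hβ1)
      calc (1 + β) * lM ≤ (1 + β) * (B / (1 + β) * lF + A / (1 + β) * lG) := this
        _ = B * lF + A * lG := by field_simp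
    · rintro (hAneg | hBneg)
      · -- A < 0, so B = 1 + β - A > 1 + β
        have hBpos : 1 + β < B := by linarith
        have hB' : (0:ℝ) < B := by linarith
        have hpq : (B / (1 + β)).HolderConjugate (-B / A) := by
          rw [Real.holderConjugate_iff]; constructor
          · rw [lt_div_iff₀ hβ1]; linarith
          · rw [inv_div, inv_div, div_neg, ← sub_eq_add_neg, div_sub_div_same,
              show 1 + β - A = B by linarith, div_self hB0]
        have hφ : Measurable fun x => (f x : ℝ≥0∞) ^ (1 + β) * (g x : ℝ≥0∞) ^ (A * (1 + β) / B) :=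
          (hfm.pow_const _).mul (hgm.pow_const _)
        have hψ : Measurable fun x => (g x : ℝ≥0∞) ^ (-(A * (1 + β) / B)) :=
          hgm.pow_const _
        have h1 := ENNReal.lintegral_mul_le_Lp_mul_Lq μ hpq hφ.aemeasurable hψ.aemeasurable
        -- LHS is ∫ f^{1+β}
        have hLHS : ∫⁻ x, ((fun x => (f x : ℝ≥0∞) ^ (1 + β) * (g x : ℝ≥0∞) ^ (A * (1 + β) / B)) *
            (fun x => (g x : ℝ≥0∞) ^ (-(A * (1 + β) / B)))) x ∂μ = F := by
          rw [hFdef]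
          refine lintegral_congr_ae ?_
          filter_upwards [hgpos] with x hx
          have hg0 : (g x : ℝ≥0∞) ≠ 0 := by simpa using ne_of_gt hx
          have hgt : (g x : ℝ≥0∞) ≠ ⊤ := ENNReal.coe_ne_top
          simp only [Pi.mul_apply]
          rw [mul_assoc, ← ENNReal.rpow_add _ _ hg0 hgt]
          simp
        rw [hLHS] at h1
        -- first integral on RHS is M, second is G
        have e1 : ∫⁻ x, ((f x : ℝ≥0∞) ^ (1 + β) * (g x : ℝ≥0∞) ^ (A * (1 + β) / B)) ^
            (B / (1 + β)) ∂μ = M := by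
          rw [hMdef]
          refine lintegral_congr fun x => ?_
          rw [ENNReal.mul_rpow_of_nonneg _ _ (by positivity), ← ENNReal.rpow_mul,
            ← ENNReal.rpow_mul]
          congr 1 <;> congr 1 <;> field_simp <;> ring
        have e2 : ∫⁻ x, ((g x : ℝ≥0∞) ^ (-(A * (1 + β) / B))) ^ (-B / A) ∂μ = G := by
          rw [hGdef]
          refine lintegral_congr fun x => ?_
          rw [← ENNReal.rpow_mul]
          congr 1
          field_simp
        rw [e1, e2, one_div_div, show 1 / (-B / A) = -A / B by rw [one_div_div, div_neg, neg_div]] at h1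
        have hlog := aux_log_le (ne_of_gt hfint) (ne_of_lt hfint') (ne_of_gt hfg)
          (ne_of_lt hfg') (ne_of_gt hgint) (ne_of_lt hgint')
          (div_nonneg hβ1.le hB'.le) (div_nonneg (by linarith) hB'.le) h1
        have := mul_le_mul_of_nonneg_left hlog (le_of_lt hB')
        have h2 : B * lF ≤ (1 + β) * lM - A * lG := by
          calc B * lF ≤ B * ((1 + β) / B * lM + -A / B * lG) := this
            _ = (1 + β) * lM - A * lG := by field_simp; ring
        linarith
      · -- B < 0, so A > 1 + β
        have hApos : 1 + β < A := by linarith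
        have hA' : (0:ℝ) < A := by linarith
        have hpq : (A / (1 + β)).HolderConjugate (-A / B) := by
          rw [Real.holderConjugate_iff]; constructor
          · rw [lt_div_iff₀ hβ1]; linarith
          · rw [inv_div, inv_div, div_neg, ← sub_eq_add_neg, div_sub_div_same,
              show 1 + β - B = A by linarith, div_self hA0]
        have hφ : Measurable fun x => (f x : ℝ≥0∞) ^ (B * (1 + β) / A) * (g x : ℝ≥0∞) ^ (1 + β) :=
          (hfm.pow_const _).mul (hgm.pow_const _)
        have hψ : Measurable fun x => (f x : ℝ≥0∞) ^ (-(B * (1 + β) / A)) :=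
          hfm.pow_const _
        have h1 := ENNReal.lintegral_mul_le_Lp_mul_Lq μ hpq hφ.aemeasurable hψ.aemeasurable
        have hLHS : ∫⁻ x, ((fun x => (f x : ℝ≥0∞) ^ (B * (1 + β) / A) * (g x : ℝ≥0∞) ^ (1 + β)) *
            (fun x => (f x : ℝ≥0∞) ^ (-(B * (1 + β) / A)))) x ∂μ = G := by
          rw [hGdef]
          refine lintegral_congr_ae ?_
          filter_upwards [hfpos] with x hx
          have hf0 : (f x : ℝ≥0∞) ≠ 0 := by simpa using ne_of_gt hx
          have hft : (f x : ℝ≥0∞) ≠ ⊤ := ENNReal.coe_ne_top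
          simp only [Pi.mul_apply]
          rw [mul_comm ((f x : ℝ≥0∞) ^ (B * (1 + β) / A)), mul_assoc,
            ← ENNReal.rpow_add _ _ hf0 hft]
          simp
        rw [hLHS] at h1
        have e1 : ∫⁻ x, ((f x : ℝ≥0∞) ^ (B * (1 + β) / A) * (g x : ℝ≥0∞) ^ (1 + β)) ^
            (A / (1 + β)) ∂μ = M := by
          rw [hMdef]
          refine lintegral_congr fun x => ?_
          rw [ENNReal.mul_rpow_of_nonneg _ _ (by positivity), ← ENNReal.rpow_mul,
            ← ENNReal.rpow_mul]
          congr 1 <;> congr 1 <;> field_simp <;> ring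
        have e2 : ∫⁻ x, ((f x : ℝ≥0∞) ^ (-(B * (1 + β) / A))) ^ (-A / B) ∂μ = F := by
          rw [hFdef]
          refine lintegral_congr fun x => ?_
          rw [← ENNReal.rpow_mul]
          congr 1
          field_simp
        rw [e1, e2, one_div_div, show 1 / (-A / B) = -B / A by rw [one_div_div, div_neg, neg_div]] at h1
        have hlog := aux_log_le (ne_of_gt hgint) (ne_of_lt hgint') (ne_of_gt hfg)
          (ne_of_lt hfg') (ne_of_gt hfint) (ne_of_lt hfint')
          (div_nonneg hβ1.le hA'.le) (div_nonneg (by linarith) hA'.le) h1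
        have := mul_le_mul_of_nonneg_left hlog (le_of_lt hA')
        have h2 : A * lG ≤ (1 + β) * lM - B * lF := by
          calc A * lG ≤ A * ((1 + β) / A * lM + -B / A * lF) := this
            _ = (1 + β) * lM - B * lF := by field_simp; ring
        linarith
  -- conclude
  have hLSD : LSD μ β A B g f = (B * lF + A * lG - (1 + β) * lM) / (A * B) := by
    rw [LSD, ← hFdef, ← hGdef, ← hMdef, ← hlF, ← hlG, ← hlM]
    field_simp
    ring
  rw [hLSD]
  rcases lt_or_gt_of_ne hA0 with hAneg | hApos
  · have hnum : B * lF + A * lG - (1 + β) * lM ≤ 0 := by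
      have := key.2 (Or.inl hAneg); linarith
    have hden : A * B < 0 := mul_neg_of_neg_of_pos hAneg (by nlinarith)
    rw [← neg_div_neg_eq]
    exact div_nonneg (by linarith) (by linarith)
  · rcases lt_or_gt_of_ne hB0 with hBneg | hBpos
    · have hnum : B * lF + A * lG - (1 + β) * lM ≤ 0 := by
        have := key.2 (Or.inr hBneg); linarith
      have hden : A * B < 0 := mul_neg_of_pos_of_neg hApos hBneg
      rw [← neg_div_neg_eq]
      exact div_nonneg (by linarith) (by linarith)
    · have hnum : 0 ≤ B * lF + A * lG - (1 + β) * lM := by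
        have := key.1 ⟨hApos, hBpos⟩; linarith
      exact div_nonneg hnum (le_of_lt (mul_pos hApos hBpos))
end

section
/- Let (X, μ) be a measure space and let g, f : X → [0,∞) be measurable with ∫ g dμ = ∫ f dμ = 1. Let β > 0 and let A > 0, B > 0 with A + B = 1 + β, and assume ∫ f^{1+β} dμ, ∫ g^{1+β} dμ and ∫ f^B g^A dμ are all finite and strictly positive. Then LSD_{β,γ}(g,f) = (1/A)·log(∫ f^{1+β} dμ) − ((1+β)/(A·B))·log(∫ f^B g^A dμ) + (1/B)·log(∫ g^{1+β} dμ) equals 0 if and only if f = g μ-almost everywhere. -/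
open MeasureTheory
open scoped ENNReal NNReal

/-- Equality case of weighted AM-GM for two nonnegative reals. -/
lemma young_eq_real {t s a b : ℝ} (ht : 0 < t) (hs : 0 < s) (hts : t + s = 1)
    (ha : 0 ≤ a) (hb : 0 ≤ b) (h : a ^ t * b ^ s = t * a + s * b) : a = b := by
  rcases ha.eq_or_lt with ha0 | ha0
  · rw [← ha0, Real.zero_rpow ht.ne', zero_mul, mul_zero, zero_add] at h
    have hb0 : b = 0 := by
      rcases mul_eq_zero.1 h.symm with h' | h'
      · exact absurd h' hs.ne'
      · exact h'
    rw [← ha0, hb0]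
  rcases hb.eq_or_lt with hb0 | hb0
  · rw [← hb0, Real.zero_rpow hs.ne', mul_zero, mul_zero, add_zero] at h
    have ha' : a = 0 := by
      rcases mul_eq_zero.1 h.symm with h' | h'
      · exact absurd h' ht.ne'
      · exact h'
    rw [ha', ← hb0]
  by_contra hne
  have hlog := strictConcaveOn_log_Ioi.2 (Set.mem_Ioi.2 ha0) (Set.mem_Ioi.2 hb0) hne ht hs hts
  simp only [smul_eq_mul] at hlog
  have h1 : a ^ t * b ^ s = Real.exp (t * Real.log a + s * Real.log b) := by
    rw [Real.exp_add, Real.rpow_def_of_pos ha0, Real.rpow_def_of_pos hb0,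
      mul_comm (Real.log a) t, mul_comm (Real.log b) s]
  have h2 : t * a + s * b = Real.exp (Real.log (t * a + s * b)) := by
    rw [Real.exp_log (by positivity)]
  have := Real.exp_lt_exp.2 hlog
  rw [← h1, ← h2] at this
  exact absurd h this.ne

/-- Young's inequality with equality case for finite extended nonnegative reals. -/
lemma young_ennreal {t s : ℝ} (ht : 0 < t) (hs : 0 < s) (hts : t + s = 1)
    {a b : ℝ≥0∞} (ha : a ≠ ∞) (hb : b ≠ ∞) :
    a ^ t * b ^ s ≤ ENNReal.ofReal t * a + ENNReal.ofReal s * b ∧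
      (a ^ t * b ^ s = ENNReal.ofReal t * a + ENNReal.ofReal s * b → a = b) := by
  lift a to ℝ≥0 using ha
  lift b to ℝ≥0 using hb
  rw [ENNReal.ofReal_eq_coe_nnreal ht.le, ENNReal.ofReal_eq_coe_nnreal hs.le,
    ← ENNReal.coe_rpow_of_nonneg a ht.le, ← ENNReal.coe_rpow_of_nonneg b hs.le,
    ← ENNReal.coe_mul, ← ENNReal.coe_mul, ← ENNReal.coe_mul, ← ENNReal.coe_add,
    ENNReal.coe_le_coe, ENNReal.coe_inj, ENNReal.coe_inj]
  have hw : (⟨t, ht.le⟩ : ℝ≥0) + ⟨s, hs.le⟩ = 1 := by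
    ext; simp [hts]
  constructor
  · exact NNReal.geom_mean_le_arith_mean2_weighted ⟨t, ht.le⟩ ⟨s, hs.le⟩ a b hw
  · intro h
    have h' : (a : ℝ) ^ t * (b : ℝ) ^ s = t * a + s * b := by
      have := congrArg (fun x : ℝ≥0 => (x : ℝ)) h
      push_cast at this
      simpa using this
    exact NNReal.coe_injective (young_eq_real ht hs hts a.coe_nonneg b.coe_nonneg h')

/-- Equality part of Theorem 1: for `A, B > 0` with `A + B = 1 + β`, the
logarithmic S-divergence vanishes if and only if `f = g` μ-a.e. -/
theorem lsd_eq_zero_iff {X : Type*} [MeasurableSpace X] (μ : Measure X)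
    (g f : X → ℝ≥0) (hg : Measurable g) (hf : Measurable f)
    (hg1 : ∫⁻ x, (g x : ℝ≥0∞) ∂μ = 1) (hf1 : ∫⁻ x, (f x : ℝ≥0∞) ∂μ = 1)
    (β A B : ℝ) (hβ : 0 < β) (hA : 0 < A) (hB : 0 < B) (hAB : A + B = 1 + β)
    (hfint : 0 < ∫⁻ x, (f x : ℝ≥0∞) ^ (1 + β) ∂μ)
    (hfint' : ∫⁻ x, (f x : ℝ≥0∞) ^ (1 + β) ∂μ < ∞)
    (hgint : 0 < ∫⁻ x, (g x : ℝ≥0∞) ^ (1 + β) ∂μ)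
    (hgint' : ∫⁻ x, (g x : ℝ≥0∞) ^ (1 + β) ∂μ < ∞)
    (hfg : 0 < ∫⁻ x, (f x : ℝ≥0∞) ^ B * (g x : ℝ≥0∞) ^ A ∂μ)
    (hfg' : ∫⁻ x, (f x : ℝ≥0∞) ^ B * (g x : ℝ≥0∞) ^ A ∂μ < ∞) :
    LSD μ β A B g f = 0 ↔ f =ᵐ[μ] g := by
  have hp0 : (0:ℝ) < 1 + β := by linarith
  set p : ℝ := 1 + β with hp
  set F := ∫⁻ x, (f x : ℝ≥0∞) ^ p ∂μ with hFdef
  set G := ∫⁻ x, (g x : ℝ≥0∞) ^ p ∂μ with hGdef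
  set M := ∫⁻ x, (f x : ℝ≥0∞) ^ B * (g x : ℝ≥0∞) ^ A ∂μ with hMdef
  set t : ℝ := B / p with htdef
  set s : ℝ := A / p with hsdef
  have ht : 0 < t := div_pos hB hp0
  have hs : 0 < s := div_pos hA hp0
  have hts : t + s = 1 := by
    rw [htdef, hsdef, ← add_div, add_comm, hAB, div_self hp0.ne']
  have hF0 : F ≠ 0 := hfint.ne'
  have hFtop : F ≠ ∞ := hfint'.ne
  have hG0 : G ≠ 0 := hgint.ne'
  have hGtop : G ≠ ∞ := hgint'.ne
  have hM0 : M ≠ 0 := hfg.ne'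
  have hMtop : M ≠ ∞ := hfg'.ne
  have hFt : 0 < F.toReal := ENNReal.toReal_pos hF0 hFtop
  have hGt : 0 < G.toReal := ENNReal.toReal_pos hG0 hGtop
  have hMt : 0 < M.toReal := ENNReal.toReal_pos hM0 hMtop
  -- Step 1: reduce LSD = 0 to the Hölder equality M = F^t * G^s
  have hLSD : LSD μ β A B g f =
      (p / (A * B)) * (t * Real.log F.toReal + s * Real.log G.toReal - Real.log M.toReal) := by
    rw [LSD]
    rw [← hp, ← hFdef, ← hGdef, ← hMdef, htdef, hsdef]
    field_simp
    ring
  have key1 : LSD μ β A B g f = 0 ↔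
      t * Real.log F.toReal + s * Real.log G.toReal = Real.log M.toReal := by
    rw [hLSD, mul_eq_zero, sub_eq_zero]
    have : p / (A * B) ≠ 0 := by positivity
    tauto
  have key2 : (t * Real.log F.toReal + s * Real.log G.toReal = Real.log M.toReal) ↔
      M.toReal = F.toReal ^ t * G.toReal ^ s := by
    constructor
    · intro h
      rw [← Real.exp_log hMt, ← h, Real.exp_add, Real.rpow_def_of_pos hFt,
        Real.rpow_def_of_pos hGt, mul_comm (Real.log F.toReal) t,
        mul_comm (Real.log G.toReal) s]
    · intro h
      rw [h, Real.log_mul (by positivity) (by positivity), Real.log_rpow hFt,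
        Real.log_rpow hGt]
  have key3 : (M.toReal = F.toReal ^ t * G.toReal ^ s) ↔ M = F ^ t * G ^ s := by
    rw [ENNReal.toReal_rpow, ENNReal.toReal_rpow, ← ENNReal.toReal_mul]
    exact ENNReal.toReal_eq_toReal_iff' hMtop
      (ENNReal.mul_ne_top (ENNReal.rpow_ne_top_of_nonneg ht.le hFtop)
        (ENNReal.rpow_ne_top_of_nonneg hs.le hGtop))
  rw [key1, key2, key3]
  have hptB : p * t = B := by rw [htdef]; field_simp
  have hpsA : p * s = A := by rw [hsdef]; field_simp
  constructor
  · -- Hölder equality → f = g a.e.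
    intro h
    set Φ : X → ℝ≥0∞ := fun x => (f x : ℝ≥0∞) ^ p * F⁻¹ with hΦdef
    set Ψ : X → ℝ≥0∞ := fun x => (g x : ℝ≥0∞) ^ p * G⁻¹ with hΨdef
    have hmf : Measurable fun x => (f x : ℝ≥0∞) ^ p := hf.coe_nnreal_ennreal.pow_const p
    have hmg : Measurable fun x => (g x : ℝ≥0∞) ^ p := hg.coe_nnreal_ennreal.pow_const p
    have hmΦ : Measurable Φ := hmf.mul_const _
    have hmΨ : Measurable Ψ := hmg.mul_const _
    have hΦint : ∫⁻ x, Φ x ∂μ = 1 := by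
      rw [hΦdef]
      rw [lintegral_mul_const' F⁻¹ _ (ENNReal.inv_ne_top.2 hF0), ← hFdef,
        ENNReal.mul_inv_cancel hF0 hFtop]
    have hΨint : ∫⁻ x, Ψ x ∂μ = 1 := by
      rw [hΨdef]
      rw [lintegral_mul_const' G⁻¹ _ (ENNReal.inv_ne_top.2 hG0), ← hGdef,
        ENNReal.mul_inv_cancel hG0 hGtop]
    have hFt0 : F ^ t ≠ 0 := by simp [ENNReal.rpow_eq_zero_iff, hF0, hFtop]
    have hFttop : F ^ t ≠ ∞ := ENNReal.rpow_ne_top_of_nonneg ht.le hFtop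
    have hGs0 : G ^ s ≠ 0 := by simp [ENNReal.rpow_eq_zero_iff, hG0, hGtop]
    have hGstop : G ^ s ≠ ∞ := ENNReal.rpow_ne_top_of_nonneg hs.le hGtop
    have hpt : ∀ x, Φ x ^ t * Ψ x ^ s =
        (f x : ℝ≥0∞) ^ B * (g x : ℝ≥0∞) ^ A * ((F ^ t)⁻¹ * (G ^ s)⁻¹) := by
      intro x
      rw [hΦdef, hΨdef]
      simp only
      rw [ENNReal.mul_rpow_of_nonneg _ _ ht.le, ENNReal.mul_rpow_of_nonneg _ _ hs.le,
        ENNReal.inv_rpow, ENNReal.inv_rpow, ← ENNReal.rpow_mul, ← ENNReal.rpow_mul,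
        hptB, hpsA]
      ring
    have hint1 : ∫⁻ x, Φ x ^ t * Ψ x ^ s ∂μ = 1 := by
      simp only [hpt]
      rw [lintegral_mul_const' _ _
        (ENNReal.mul_ne_top (ENNReal.inv_ne_top.2 hFt0) (ENNReal.inv_ne_top.2 hGs0)),
        ← hMdef, h, mul_mul_mul_comm, ENNReal.mul_inv_cancel hFt0 hFttop,
        ENNReal.mul_inv_cancel hGs0 hGstop, one_mul]
    have hint2 : ∫⁻ x, (ENNReal.ofReal t * Φ x + ENNReal.ofReal s * Ψ x) ∂μ = 1 := by
      rw [lintegral_add_left (hmΦ.const_mul _), lintegral_const_mul _ hmΦ,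
        lintegral_const_mul _ hmΨ, hΦint, hΨint, mul_one, mul_one,
        ← ENNReal.ofReal_add ht.le hs.le, hts, ENNReal.ofReal_one]
    have hΦfin : ∀ᵐ x ∂μ, Φ x < ∞ :=
      ae_lt_top hmΦ (by rw [hΦint]; exact ENNReal.one_ne_top)
    have hΨfin : ∀ᵐ x ∂μ, Ψ x < ∞ :=
      ae_lt_top hmΨ (by rw [hΨint]; exact ENNReal.one_ne_top)
    have hae_le : (fun x => Φ x ^ t * Ψ x ^ s) ≤ᵐ[μ]
        fun x => ENNReal.ofReal t * Φ x + ENNReal.ofReal s * Ψ x := by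
      filter_upwards [hΦfin, hΨfin] with x h1 h2
      exact (young_ennreal ht hs hts h1.ne h2.ne).1
    have heq : (fun x => Φ x ^ t * Ψ x ^ s) =ᵐ[μ]
        fun x => ENNReal.ofReal t * Φ x + ENNReal.ofReal s * Ψ x :=
      ae_eq_of_ae_le_of_lintegral_le hae_le
        (by rw [hint1]; exact ENNReal.one_ne_top)
        ((hmΦ.const_mul _).add (hmΨ.const_mul _)).aemeasurable
        (by rw [hint1, hint2])
    have hΦΨ : Φ =ᵐ[μ] Ψ := by
      filter_upwards [heq, hΦfin, hΨfin] with x h1 h2 h3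
      exact (young_ennreal ht hs hts h2.ne h3.ne).2 h1
    set c : ℝ≥0∞ := (G⁻¹ * F) ^ (1 / p) with hcdef
    have hctop : c ≠ ∞ :=
      ENNReal.rpow_ne_top_of_nonneg (by positivity)
        (ENNReal.mul_ne_top (ENNReal.inv_ne_top.2 hG0) hFtop)
    have hfc : ∀ᵐ x ∂μ, (f x : ℝ≥0∞) = (g x : ℝ≥0∞) * c := by
      filter_upwards [hΦΨ] with x hx
      have h1 : (f x : ℝ≥0∞) ^ p = (g x : ℝ≥0∞) ^ p * (G⁻¹ * F) := by
        have h2 := congrArg (· * F) hx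
        simp only [hΦdef, hΨdef] at h2
        calc (f x : ℝ≥0∞) ^ p = (f x : ℝ≥0∞) ^ p * (F⁻¹ * F) := by
              rw [ENNReal.inv_mul_cancel hF0 hFtop, mul_one]
          _ = (g x : ℝ≥0∞) ^ p * G⁻¹ * F := by rw [← mul_assoc]; exact h2
          _ = _ := by ring
      have h3 := congrArg (· ^ (1 / p)) h1
      rwa [← ENNReal.rpow_mul, mul_one_div_cancel hp0.ne', ENNReal.rpow_one,
        ENNReal.mul_rpow_of_nonneg _ _ (by positivity : (0:ℝ) ≤ 1 / p),
        ← ENNReal.rpow_mul, mul_one_div_cancel hp0.ne', ENNReal.rpow_one] at h3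
    have hc1 : c = 1 := by
      have h3 : (1 : ℝ≥0∞) = 1 * c := by
        calc (1 : ℝ≥0∞) = ∫⁻ x, (f x : ℝ≥0∞) ∂μ := hf1.symm
          _ = ∫⁻ x, (g x : ℝ≥0∞) * c ∂μ := lintegral_congr_ae hfc
          _ = (∫⁻ x, (g x : ℝ≥0∞) ∂μ) * c := lintegral_mul_const' c _ hctop
          _ = 1 * c := by rw [hg1]
      rw [one_mul] at h3
      exact h3.symm
    filter_upwards [hfc] with x hx
    have : (f x : ℝ≥0∞) = (g x : ℝ≥0∞) := by rw [hx, hc1, mul_one]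
    exact_mod_cast this
  · -- f = g a.e. → Hölder equality
    intro h
    have hFG : F = G := lintegral_congr_ae (h.mono fun x hx => by simp only [hx])
    have hMG : M = G := by
      refine lintegral_congr_ae (h.mono fun x hx => ?_)
      simp only [hx, ← ENNReal.rpow_add_of_nonneg B A hB.le hA.le]
      congr 1
      linarith
    rw [hMG, hFG, ← ENNReal.rpow_add_of_nonneg t s ht.le hs.le, hts, ENNReal.rpow_one]
end

section
/- Let (X, μ) be a measure space and let g, f : X → [0,∞) be measurable with ∫ g dμ = ∫ f dμ = 1. For β > 0, if ∫ f^{1+β} dμ, ∫ g^{1+β} dμ and ∫ f^β g dμ are finite and strictly positive, then the logarithmic density power divergence LDPD_β(g,f) = log(∫ f^{1+β} dμ) − (1 + 1/β)·log(∫ f^β g dμ) + (1/β)·log(∫ g^{1+β} dμ) ≥ 0, with equality if and only if f = g μ-almost everywhere. -/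
open MeasureTheory
open scoped ENNReal NNReal

/-- Equality case of Young's inequality for nonnegative reals. -/
lemma young_eq_aux {p q : ℝ} (hpq : Real.HolderConjugate p q) {a b : ℝ}
    (ha : 0 ≤ a) (hb : 0 ≤ b) (h : a * b = a ^ p / p + b ^ q / q) : a ^ p = b ^ q := by
  rcases eq_or_lt_of_le ha with ha0 | ha0
  · rw [← ha0, Real.zero_rpow hpq.ne_zero] at h ⊢
    rw [zero_mul, zero_div, zero_add] at h
    rcases div_eq_zero_iff.mp h.symm with h' | h'
    · exact h'.symm
    · exact absurd h' hpq.symm.ne_zero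
  rcases eq_or_lt_of_le hb with hb0 | hb0
  · rw [← hb0, Real.zero_rpow hpq.symm.ne_zero] at h ⊢
    rw [mul_zero, zero_div, add_zero] at h
    rcases div_eq_zero_iff.mp h.symm with h' | h'
    · exact h'
    · exact absurd h' hpq.ne_zero
  by_contra hne
  have hx : (0:ℝ) < a ^ p := Real.rpow_pos_of_pos ha0 p
  have hy : (0:ℝ) < b ^ q := Real.rpow_pos_of_pos hb0 q
  have hlt := strictConcaveOn_log_Ioi.2 (Set.mem_Ioi.mpr hx) (Set.mem_Ioi.mpr hy) hne
    hpq.inv_pos hpq.symm.inv_pos hpq.inv_add_inv_eq_one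
  simp only [smul_eq_mul] at hlt
  rw [Real.log_rpow ha0, Real.log_rpow hb0] at hlt
  have e1 : p⁻¹ * (p * Real.log a) + q⁻¹ * (q * Real.log b) = Real.log a + Real.log b := by
    field_simp
    rw [mul_comm p, mul_comm q, mul_div_assoc, mul_div_assoc, div_self hpq.ne_zero,
      div_self hpq.symm.ne_zero, mul_one, mul_one]
  rw [e1] at hlt
  have e2 : p⁻¹ * a ^ p + q⁻¹ * b ^ q = a * b := by
    rw [h]; rw [div_eq_inv_mul, div_eq_inv_mul]
  rw [e2, Real.log_mul ha0.ne' hb0.ne'] at hlt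
  exact lt_irrefl _ hlt

/-- Equality case of Hölder's inequality for `lintegral`, normalized form. -/
lemma holder_eq_aux {X : Type*} [MeasurableSpace X] {μ : Measure X} {u v : X → ℝ≥0∞}
    (hu : Measurable u) (hv : Measurable v) {p q : ℝ} (hpq : Real.HolderConjugate p q)
    (hup : ∫⁻ x, u x ^ p ∂μ = 1) (hvq : ∫⁻ x, v x ^ q ∂μ = 1)
    (huv : ∫⁻ x, u x * v x ∂μ = 1) :
    ∀ᵐ x ∂μ, u x ^ p = v x ^ q := by
  set P := ENNReal.ofReal p with hP
  set Q := ENNReal.ofReal q with hQ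
  have hPne : P ≠ 0 := (ENNReal.ofReal_pos.mpr hpq.pos).ne'
  have hQne : Q ≠ 0 := (ENNReal.ofReal_pos.mpr hpq.symm.pos).ne'
  have hupm : Measurable fun x => u x ^ p := hu.pow_const p
  have hvqm : Measurable fun x => v x ^ q := hv.pow_const q
  set F : X → ℝ≥0∞ := fun x => u x ^ p / P + v x ^ q / Q with hF
  have hFmeas : Measurable F := (hupm.div_const P).add (hvqm.div_const Q)
  have hFint : ∫⁻ x, F x ∂μ = 1 := by
    rw [hF]
    simp only [div_eq_mul_inv]
    rw [lintegral_add_left (hupm.mul_const _),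
      lintegral_mul_const' _ _ (ENNReal.inv_ne_top.mpr hPne),
      lintegral_mul_const' _ _ (ENNReal.inv_ne_top.mpr hQne), hup, hvq, one_mul, one_mul]
    exact hpq.inv_add_inv_ennreal
  have hle : ∀ x, u x * v x ≤ F x := fun x => ENNReal.young_inequality _ _ hpq
  have hsub : ∫⁻ x, (F x - u x * v x) ∂μ = 0 := by
    rw [lintegral_sub (g := fun x => u x * v x) (hu.mul hv) (by rw [huv]; exact ENNReal.one_ne_top)
      (Filter.Eventually.of_forall hle), hFint, huv, tsub_self]
  have h0 : ∀ᵐ x ∂μ, F x - u x * v x = 0 := by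
    have := (lintegral_eq_zero_iff (hFmeas.sub (hu.mul hv))).mp hsub
    filter_upwards [this] with x hx using hx
  have hufin : ∀ᵐ x ∂μ, u x ^ p < ∞ := ae_lt_top hupm (by rw [hup]; exact ENNReal.one_ne_top)
  have hvfin : ∀ᵐ x ∂μ, v x ^ q < ∞ := ae_lt_top hvqm (by rw [hvq]; exact ENNReal.one_ne_top)
  filter_upwards [h0, hufin, hvfin] with x hx hxu hxv
  have heq : u x * v x = F x := le_antisymm (hle x) (tsub_eq_zero_iff_le.mp hx)
  have hune : u x ≠ ∞ := fun h => by
    rw [h, ENNReal.top_rpow_of_pos hpq.pos] at hxu; exact (lt_irrefl _ hxu).elim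
  have hvne : v x ≠ ∞ := fun h => by
    rw [h, ENNReal.top_rpow_of_pos hpq.symm.pos] at hxv; exact (lt_irrefl _ hxv).elim
  set a := (u x).toReal with hadef
  set b := (v x).toReal with hbdef
  have hta : (u x ^ p).toReal = a ^ p := (ENNReal.toReal_rpow _ _).symm
  have htb : (v x ^ q).toReal = b ^ q := (ENNReal.toReal_rpow _ _).symm
  have hreal : a * b = a ^ p / p + b ^ q / q := by
    have := congrArg ENNReal.toReal heq
    rw [ENNReal.toReal_mul, hF] at this
    rw [ENNReal.toReal_add ((ENNReal.div_lt_top hxu.ne (by exact hPne)).ne)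
        ((ENNReal.div_lt_top hxv.ne (by exact hQne)).ne),
      ENNReal.toReal_div, ENNReal.toReal_div, hta, htb, hP, hQ,
      ENNReal.toReal_ofReal hpq.nonneg, ENNReal.toReal_ofReal hpq.symm.nonneg] at this
    exact this
  have := young_eq_aux hpq ENNReal.toReal_nonneg ENNReal.toReal_nonneg hreal
  rw [← hta, ← htb] at this
  exact (ENNReal.toReal_eq_toReal_iff' hxu.ne hxv.ne).mp this

/-- The logarithmic density power divergence
`LDPD_β(g,f) = log ∫ f^{1+β} − (1 + 1/β)·log ∫ f^β g + (1/β)·log ∫ g^{1+β}`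
is nonnegative for `β > 0`, with equality iff `f = g` μ-a.e. -/
theorem ldpd_nonneg_eq_zero_iff {X : Type*} [MeasurableSpace X] (μ : Measure X)
    (g f : X → ℝ≥0) (hg : Measurable g) (hf : Measurable f)
    (hg1 : ∫⁻ x, (g x : ℝ≥0∞) ∂μ = 1) (hf1 : ∫⁻ x, (f x : ℝ≥0∞) ∂μ = 1)
    (β : ℝ) (hβ : 0 < β)
    (hfint : 0 < ∫⁻ x, (f x : ℝ≥0∞) ^ (1 + β) ∂μ)
    (hfint' : ∫⁻ x, (f x : ℝ≥0∞) ^ (1 + β) ∂μ < ∞)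
    (hgint : 0 < ∫⁻ x, (g x : ℝ≥0∞) ^ (1 + β) ∂μ)
    (hgint' : ∫⁻ x, (g x : ℝ≥0∞) ^ (1 + β) ∂μ < ∞)
    (hfg : 0 < ∫⁻ x, (f x : ℝ≥0∞) ^ β * (g x : ℝ≥0∞) ∂μ)
    (hfg' : ∫⁻ x, (f x : ℝ≥0∞) ^ β * (g x : ℝ≥0∞) ∂μ < ∞) :
    let L : ℝ :=
      Real.log (∫⁻ x, (f x : ℝ≥0∞) ^ (1 + β) ∂μ).toReal -
        (1 + 1 / β) * Real.log (∫⁻ x, (f x : ℝ≥0∞) ^ β * (g x : ℝ≥0∞) ∂μ).toReal +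
        (1 / β) * Real.log (∫⁻ x, (g x : ℝ≥0∞) ^ (1 + β) ∂μ).toReal
    0 ≤ L ∧ (L = 0 ↔ f =ᵐ[μ] g) := by
  intro L
  have hβ1 : (0:ℝ) < 1 + β := by linarith
  have hbinv : (0:ℝ) < 1/β := by positivity
  have hp : (0:ℝ) < 1 + 1/β := by linarith
  have hpq : (1 + 1/β).HolderConjugate (1 + β) := by
    rw [Real.holderConjugate_iff]
    constructor
    · linarith
    · field_simp
      ring
  have hexp : β * (1 + 1/β) = 1 + β := by field_simp; ring
  have hmf : Measurable fun x => (f x : ℝ≥0∞) := hf.coe_nnreal_ennreal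
  have hmg : Measurable fun x => (g x : ℝ≥0∞) := hg.coe_nnreal_ennreal
  set A := ∫⁻ x, (f x : ℝ≥0∞) ^ (1 + β) ∂μ with hAdef
  set B := ∫⁻ x, (g x : ℝ≥0∞) ^ (1 + β) ∂μ with hBdef
  set C := ∫⁻ x, (f x : ℝ≥0∞) ^ β * (g x : ℝ≥0∞) ∂μ with hCdef
  have hLdef : L = Real.log A.toReal - (1 + 1/β) * Real.log C.toReal
      + (1/β) * Real.log B.toReal := rfl
  have haA : 0 < A.toReal := ENNReal.toReal_pos hfint.ne' hfint'.ne
  have hbB : 0 < B.toReal := ENNReal.toReal_pos hgint.ne' hgint'.ne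
  have hcC : 0 < C.toReal := ENNReal.toReal_pos hfg.ne' hfg'.ne
  -- Hölder's inequality
  have holder : C ≤ A ^ (1/(1+1/β)) * B ^ (1/(1+β)) := by
    have h := ENNReal.lintegral_mul_le_Lp_mul_Lq μ hpq
      (hmf.pow_const β).aemeasurable hmg.aemeasurable
    simp only [Pi.mul_apply, ← ENNReal.rpow_mul, hexp] at h
    exact h
  have hfinrhs : A ^ (1/(1+1/β)) * B ^ (1/(1+β)) ≠ ∞ :=
    ENNReal.mul_ne_top (ENNReal.rpow_ne_top_of_nonneg (by positivity) hfint'.ne)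
      (ENNReal.rpow_ne_top_of_nonneg (by positivity) hgint'.ne)
  have hcle : C.toReal ≤ A.toReal ^ (1/(1+1/β)) * B.toReal ^ (1/(1+β)) := by
    have h := ENNReal.toReal_mono hfinrhs holder
    rwa [ENNReal.toReal_mul, ← ENNReal.toReal_rpow, ← ENNReal.toReal_rpow] at h
  have key : Real.log C.toReal ≤ (1/(1+1/β)) * Real.log A.toReal
      + (1/(1+β)) * Real.log B.toReal := by
    calc Real.log C.toReal ≤ Real.log (A.toReal ^ (1/(1+1/β)) * B.toReal ^ (1/(1+β))) :=
          Real.log_le_log hcC hcle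
      _ = (1/(1+1/β)) * Real.log A.toReal + (1/(1+β)) * Real.log B.toReal := by
          rw [Real.log_mul (Real.rpow_pos_of_pos haA _).ne' (Real.rpow_pos_of_pos hbB _).ne',
            Real.log_rpow haA, Real.log_rpow hbB]
  have e : (1+1/β) * ((1/(1+1/β)) * Real.log A.toReal + (1/(1+β)) * Real.log B.toReal)
      = Real.log A.toReal + (1/β) * Real.log B.toReal := by
    field_simp
    ring
  have h2 : (1+1/β) * Real.log C.toReal ≤ Real.log A.toReal + (1/β) * Real.log B.toReal := by
    have h := mul_le_mul_of_nonneg_left key hp.le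
    rwa [e] at h
  refine ⟨by rw [hLdef]; linarith, ?_, ?_⟩
  · -- L = 0 → f =ᵐ[μ] g
    intro hL0
    rw [hLdef] at hL0
    have h3 : (1+1/β) * Real.log C.toReal = Real.log A.toReal + (1/β) * Real.log B.toReal := by
      linarith
    have h4 : Real.log C.toReal = (1/(1+1/β)) * Real.log A.toReal
        + (1/(1+β)) * Real.log B.toReal := by
      apply mul_left_cancel₀ hp.ne'
      rw [h3, e]
    have h5 : C.toReal = A.toReal ^ (1/(1+1/β)) * B.toReal ^ (1/(1+β)) := by
      have h6 := congrArg Real.exp h4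
      rw [Real.exp_log hcC, Real.exp_add] at h6
      rw [h6, Real.rpow_def_of_pos haA, Real.rpow_def_of_pos hbB,
        mul_comm (Real.log A.toReal), mul_comm (Real.log B.toReal)]
    have h7 : C = A ^ (1/(1+1/β)) * B ^ (1/(1+β)) := by
      apply (ENNReal.toReal_eq_toReal_iff' hfg'.ne hfinrhs).mp
      rw [ENNReal.toReal_mul, ← ENNReal.toReal_rpow, ← ENNReal.toReal_rpow]
      exact h5
    -- normalized functions
    set sA := A ^ (1/(1+1/β)) with hsA
    set sB := B ^ (1/(1+β)) with hsB
    have hsAne : sA ≠ 0 := (ENNReal.rpow_pos hfint hfint'.ne).ne'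
    have hsAfin : sA ≠ ∞ := ENNReal.rpow_ne_top_of_nonneg (by positivity) hfint'.ne
    have hsBne : sB ≠ 0 := (ENNReal.rpow_pos hgint hgint'.ne).ne'
    have hsBfin : sB ≠ ∞ := ENNReal.rpow_ne_top_of_nonneg (by positivity) hgint'.ne
    have hu : Measurable fun x => (f x : ℝ≥0∞)^β / sA := (hmf.pow_const β).div_const sA
    have hv : Measurable fun x => (g x : ℝ≥0∞) / sB := hmg.div_const sB
    have hsApow : sA ^ (1 + 1/β) = A := by
      rw [hsA, ← ENNReal.rpow_mul, one_div, inv_mul_cancel₀ hp.ne', ENNReal.rpow_one]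
    have hsBpow : sB ^ (1 + β) = B := by
      rw [hsB, ← ENNReal.rpow_mul, one_div, inv_mul_cancel₀ hβ1.ne', ENNReal.rpow_one]
    have hup : ∫⁻ x, ((f x : ℝ≥0∞)^β / sA) ^ (1 + 1/β) ∂μ = 1 := by
      have e1 : ∀ x, ((f x : ℝ≥0∞)^β / sA) ^ (1 + 1/β) = (f x : ℝ≥0∞)^(1+β) * A⁻¹ := by
        intro x
        rw [ENNReal.div_rpow_of_nonneg _ _ hp.le, ← ENNReal.rpow_mul, hexp, hsApow,
          div_eq_mul_inv]
      rw [lintegral_congr e1, lintegral_mul_const' _ _ (ENNReal.inv_ne_top.mpr hfint.ne')]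
      exact ENNReal.mul_inv_cancel hfint.ne' hfint'.ne
    have hvq : ∫⁻ x, ((g x : ℝ≥0∞) / sB) ^ (1 + β) ∂μ = 1 := by
      have e1 : ∀ x, ((g x : ℝ≥0∞) / sB) ^ (1 + β) = (g x : ℝ≥0∞)^(1+β) * B⁻¹ := by
        intro x
        rw [ENNReal.div_rpow_of_nonneg _ _ hβ1.le, hsBpow, div_eq_mul_inv]
      rw [lintegral_congr e1, lintegral_mul_const' _ _ (ENNReal.inv_ne_top.mpr hgint.ne')]
      exact ENNReal.mul_inv_cancel hgint.ne' hgint'.ne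
    have huv : ∫⁻ x, ((f x : ℝ≥0∞)^β / sA) * ((g x : ℝ≥0∞) / sB) ∂μ = 1 := by
      have e1 : ∀ x, ((f x : ℝ≥0∞)^β / sA) * ((g x : ℝ≥0∞) / sB)
          = ((f x : ℝ≥0∞)^β * (g x : ℝ≥0∞)) * (sA⁻¹ * sB⁻¹) := by
        intro x
        rw [div_eq_mul_inv, div_eq_mul_inv, mul_mul_mul_comm]
      rw [lintegral_congr e1, lintegral_mul_const' _ _
        (ENNReal.mul_ne_top (ENNReal.inv_ne_top.mpr hsAne) (ENNReal.inv_ne_top.mpr hsBne))]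
      show C * (sA⁻¹ * sB⁻¹) = 1
      rw [h7, mul_mul_mul_comm, ENNReal.mul_inv_cancel hsAne hsAfin,
        ENNReal.mul_inv_cancel hsBne hsBfin, one_mul]
    have hae := holder_eq_aux hu hv hpq hup hvq huv
    -- from the pointwise equality, derive f = g a.e.
    set tA := A ^ (1/(1+β)) with htA
    set tB := B ^ (1/(1+β)) with htB
    have htAne : tA ≠ 0 := (ENNReal.rpow_pos hfint hfint'.ne).ne'
    have htAfin : tA ≠ ∞ := ENNReal.rpow_ne_top_of_nonneg (by positivity) hfint'.ne
    have htBfin : tB ≠ ∞ := ENNReal.rpow_ne_top_of_nonneg (by positivity) hgint'.ne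
    have h8 : ∀ᵐ x ∂μ, (f x : ℝ≥0∞) * tA⁻¹ = (g x : ℝ≥0∞) * tB⁻¹ := by
      filter_upwards [hae] with x hx
      have hx1 : (f x : ℝ≥0∞)^(1+β) * A⁻¹ = (g x : ℝ≥0∞)^(1+β) * B⁻¹ := by
        have l1 : ((f x : ℝ≥0∞)^β / sA) ^ (1 + 1/β) = (f x : ℝ≥0∞)^(1+β) * A⁻¹ := by
          rw [ENNReal.div_rpow_of_nonneg _ _ hp.le, ← ENNReal.rpow_mul, hexp, hsApow,
            div_eq_mul_inv]
        have l2 : ((g x : ℝ≥0∞) / sB) ^ (1 + β) = (g x : ℝ≥0∞)^(1+β) * B⁻¹ := by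
          rw [ENNReal.div_rpow_of_nonneg _ _ hβ1.le, hsBpow, div_eq_mul_inv]
        rw [← l1, ← l2]; exact hx
      have hx2 := congrArg (fun z : ℝ≥0∞ => z ^ (1/(1+β))) hx1
      rw [ENNReal.mul_rpow_of_nonneg _ _ (by positivity : (0:ℝ) ≤ 1/(1+β)),
        ENNReal.mul_rpow_of_nonneg _ _ (by positivity : (0:ℝ) ≤ 1/(1+β)),
        ← ENNReal.rpow_mul ((f x : ℝ≥0∞)), ← ENNReal.rpow_mul ((g x : ℝ≥0∞)),
        mul_one_div_cancel hβ1.ne', ENNReal.rpow_one, ENNReal.rpow_one,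
        ENNReal.inv_rpow, ENNReal.inv_rpow] at hx2
      exact hx2
    have htBne : tB ≠ 0 := (ENNReal.rpow_pos hgint hgint'.ne).ne'
    have h9 : tA⁻¹ = tB⁻¹ := by
      have hint := lintegral_congr_ae h8
      rwa [lintegral_mul_const' _ _ (ENNReal.inv_ne_top.mpr htAne),
        lintegral_mul_const' _ _ (ENNReal.inv_ne_top.mpr htBne),
        hf1, hg1, one_mul, one_mul] at hint
    filter_upwards [h8] with x hx
    have hfg_pt : (f x : ℝ≥0∞) = (g x : ℝ≥0∞) := by
      calc (f x : ℝ≥0∞) = (f x : ℝ≥0∞) * tA⁻¹ * tA := by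
            rw [mul_assoc, ENNReal.inv_mul_cancel htAne htAfin, mul_one]
        _ = (g x : ℝ≥0∞) * tA⁻¹ * tA := by rw [hx, h9]
        _ = (g x : ℝ≥0∞) := by
            rw [mul_assoc, ENNReal.inv_mul_cancel htAne htAfin, mul_one]
    exact_mod_cast hfg_pt
  · -- f =ᵐ[μ] g → L = 0
    intro hae
    have hBA : B = A := by
      rw [hBdef, hAdef]
      refine lintegral_congr_ae ?_
      filter_upwards [hae] with x hx
      rw [hx]
    have hCA : C = A := by
      rw [hCdef, hAdef]
      refine lintegral_congr_ae ?_
      filter_upwards [hae] with x hx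
      rw [hx, ENNReal.rpow_add_of_nonneg 1 β zero_le_one hβ.le, ENNReal.rpow_one]
      exact mul_comm _ _
    rw [hLdef, hBA, hCA]
    ring
end

section
/- Let X be a nonempty finite set and let g, f : X → ℝ be strictly positive with Σ_{x∈X} g(x) = Σ_{x∈X} f(x) = 1. Then the logarithmic power divergence converges to the likelihood disparity as γ → 0: the function γ ↦ (1/(γ(γ+1)))·log( Σ_{x∈X} g(x)^{1+γ} f(x)^{−γ} ), defined for γ ≠ 0, tends to Σ_{x∈X} g(x)·log(g(x)/f(x)) as γ → 0. -/
open Filter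
open scoped Topology BigOperators

/-- On a finite set, the logarithmic power divergence converges to the likelihood
disparity (Kullback–Leibler divergence) as `γ → 0`. -/
theorem lpd_tendsto_likelihood_disparity {X : Type*} [Fintype X] [Nonempty X]
    (g f : X → ℝ) (hg : ∀ x, 0 < g x) (hf : ∀ x, 0 < f x)
    (hgs : ∑ x, g x = 1) (hfs : ∑ x, f x = 1) :
    Tendsto
      (fun γ : ℝ => (1 / (γ * (γ + 1))) * Real.log (∑ x, g x ^ (1 + γ) * f x ^ (-γ)))
      (𝓝[≠] (0 : ℝ)) (𝓝 (∑ x, g x * Real.log (g x / f x))) := by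
  set L : ℝ := ∑ x, g x * Real.log (g x / f x) with hL
  set S : ℝ → ℝ := fun γ => ∑ x, g x ^ (1 + γ) * f x ^ (-γ) with hS
  have hS0 : S 0 = 1 := by
    simp only [hS, neg_zero, add_zero, Real.rpow_zero, Real.rpow_one, mul_one]
    exact hgs
  have hSd : HasDerivAt S L 0 := by
    have : HasDerivAt S (∑ x, g x * Real.log (g x / f x)) 0 := by
      apply HasDerivAt.fun_sum
      intro x _
      have hgx := hg x
      have hfx := hf x
      have h1 : ∀ γ : ℝ, g x ^ (1 + γ) * f x ^ (-γ)
          = Real.exp ((1 + γ) * Real.log (g x) + (-γ) * Real.log (f x)) := by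
        intro γ
        rw [Real.exp_add, Real.rpow_def_of_pos hgx, Real.rpow_def_of_pos hfx,
          mul_comm (Real.log (g x)), mul_comm (Real.log (f x))]
      have h2 : HasDerivAt (fun γ : ℝ => (1 + γ) * Real.log (g x) + (-γ) * Real.log (f x))
          (Real.log (g x) - Real.log (f x)) 0 := by
        have ha : HasDerivAt (fun γ : ℝ => (1 + γ)) 1 0 := by
          simpa using (hasDerivAt_id (0:ℝ)).const_add (1:ℝ)
        have hb : HasDerivAt (fun γ : ℝ => -γ) (-1 : ℝ) 0 := (hasDerivAt_id (0:ℝ)).neg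
        simpa [sub_eq_add_neg, neg_mul, Pi.add_def] using
          (ha.mul_const (Real.log (g x))).add (hb.mul_const (Real.log (f x)))
      have h3 := (Real.hasDerivAt_exp _).comp 0 h2
      have : HasDerivAt (fun γ : ℝ => g x ^ (1 + γ) * f x ^ (-γ))
          (Real.exp ((1 + 0) * Real.log (g x) + (-0) * Real.log (f x))
            * (Real.log (g x) - Real.log (f x))) 0 := by
        simp only [h1]
        simpa [Function.comp_def, mul_comm] using h3
      have h4 : Real.exp ((1 + 0) * Real.log (g x) + (-0) * Real.log (f x)) = g x := by
        simp [Real.exp_log hgx]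
      rw [h4] at this
      simpa [Real.log_div (ne_of_gt hgx) (ne_of_gt hfx)] using this
    simpa [hL] using this
  have hFd : HasDerivAt (fun γ => Real.log (S γ)) L 0 := by
    have := (Real.hasDerivAt_log (by rw [hS0]; norm_num)).comp 0 hSd
    simpa [hS0, Function.comp_def] using this
  have hslope : Tendsto (fun γ : ℝ => (γ)⁻¹ * Real.log (S γ)) (𝓝[≠] 0) (𝓝 L) := by
    have := hasDerivAt_iff_tendsto_slope.mp hFd
    have h0 : Real.log (S 0) = 0 := by rw [hS0]; simp
    refine this.congr' ?_
    filter_upwards [self_mem_nhdsWithin] with γ hγ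
    simp [slope, h0, div_eq_inv_mul]
  have hfrac : Tendsto (fun γ : ℝ => (γ + 1)⁻¹) (𝓝[≠] (0:ℝ)) (𝓝 1) := by
    have : Tendsto (fun γ : ℝ => (γ + 1)⁻¹) (𝓝 (0:ℝ)) (𝓝 1) := by
      have : ContinuousAt (fun γ : ℝ => (γ + 1)⁻¹) 0 := by
        apply ContinuousAt.inv₀
        · exact (continuous_id.add continuous_const).continuousAt
        · norm_num
      simpa using this.tendsto
    exact this.mono_left nhdsWithin_le_nhds
  have := hslope.mul hfrac
  rw [mul_one] at this
  refine this.congr ?_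
  intro γ
  simp only [hS]
  rw [one_div, mul_inv]
  ring
end

section
/- Let (X, μ) be a measure space and let {f_θ : θ ∈ Θ} be a family of measurable probability densities f_θ : X → [0,∞) (∫ f_θ dμ = 1 for all θ), each strictly positive μ-a.e. Let β > 0 and γ ∈ ℝ with A = 1 + γ(1−β) ≠ 0 and B = β − γ(1−β) ≠ 0, and suppose that for every θ, θ' ∈ Θ the integrals ∫ f_θ^{1+β} dμ and ∫ f_θ^B f_{θ'}^A dμ are finite and strictly positive. Fix θ₀ ∈ Θ. Then θ₀ minimizes the map θ ↦ LSD_{β,γ}(f_{θ₀}, f_θ) over Θ, i.e. LSD_{β,γ}(f_{θ₀}, f_θ) ≥ LSD_{β,γ}(f_{θ₀}, f_{θ₀}) = 0 for all θ ∈ Θ. -/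
open MeasureTheory
open scoped ENNReal NNReal

/-- An `rpow` of a finite `ℝ≥0∞` is finite unless the base is `0` and the
exponent negative. -/
lemma lsd_rpow_ne_top {a : ℝ≥0∞} {y : ℝ} (h : a = 0 → 0 ≤ y) (ha : a ≠ ⊤) : a ^ y ≠ ⊤ := by
  intro hc
  rcases ENNReal.rpow_eq_top_iff.mp hc with ⟨h0, hneg⟩ | ⟨ht, _⟩
  · exact absurd (h h0) (not_le.mpr hneg)
  · exact ha ht

/-- Passing a Hölder-type inequality in `ℝ≥0∞` to logarithms of `toReal`s. -/
lemma lsd_log_aux {a b c : ℝ≥0∞} (ha0 : a ≠ 0) (ha : a ≠ ⊤) (hb0 : b ≠ 0) (hb : b ≠ ⊤)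
    (hc0 : c ≠ 0) (hc : c ≠ ⊤) {s t : ℝ} (h : a ≤ b ^ s * c ^ t) :
    Real.log a.toReal ≤ s * Real.log b.toReal + t * Real.log c.toReal := by
  have hbt : 0 < b.toReal := ENNReal.toReal_pos hb0 hb
  have hct : 0 < c.toReal := ENNReal.toReal_pos hc0 hc
  have hat : 0 < a.toReal := ENNReal.toReal_pos ha0 ha
  have hrhs_ne : b ^ s * c ^ t ≠ ⊤ :=
    ENNReal.mul_ne_top (lsd_rpow_ne_top (fun h0 => absurd h0 hb0) hb)
      (lsd_rpow_ne_top (fun h0 => absurd h0 hc0) hc)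
  have h' : a.toReal ≤ b.toReal ^ s * c.toReal ^ t := by
    have := ENNReal.toReal_mono hrhs_ne h
    rwa [ENNReal.toReal_mul, ← ENNReal.toReal_rpow, ← ENNReal.toReal_rpow] at this
  calc Real.log a.toReal ≤ Real.log (b.toReal ^ s * c.toReal ^ t) := Real.log_le_log hat h'
    _ = s * Real.log b.toReal + t * Real.log c.toReal := by
        rw [Real.log_mul (by positivity) (by positivity), Real.log_rpow hbt, Real.log_rpow hct]

/-- Fisher consistency of the minimum LSD functional: when the true density
`f θ₀` belongs to the model, `θ₀` minimizes `θ ↦ LSD_{β,γ}(f θ₀, f θ)`, and the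
minimum value is zero. -/
theorem lsd_fisher_consistency {X : Type*} [MeasurableSpace X] (μ : Measure X)
    {Θ : Type*} (f : Θ → X → ℝ≥0)
    (hmeas : ∀ θ, Measurable (f θ))
    (hprob : ∀ θ, ∫⁻ x, (f θ x : ℝ≥0∞) ∂μ = 1)
    (hpos : ∀ θ, ∀ᵐ x ∂μ, 0 < f θ x)
    (β γ A B : ℝ) (hβ : 0 < β)
    (hA : A = 1 + γ * (1 - β)) (hB : B = β - γ * (1 - β))
    (hA0 : A ≠ 0) (hB0 : B ≠ 0)
    (hint1 : ∀ θ, 0 < ∫⁻ x, (f θ x : ℝ≥0∞) ^ (1 + β) ∂μ ∧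
      ∫⁻ x, (f θ x : ℝ≥0∞) ^ (1 + β) ∂μ < ∞)
    (hint2 : ∀ θ θ' : Θ, 0 < ∫⁻ x, (f θ x : ℝ≥0∞) ^ B * (f θ' x : ℝ≥0∞) ^ A ∂μ ∧
      ∫⁻ x, (f θ x : ℝ≥0∞) ^ B * (f θ' x : ℝ≥0∞) ^ A ∂μ < ∞)
    (θ₀ : Θ) :
    (∀ θ : Θ, LSD μ β A B (f θ₀) (f θ₀) ≤ LSD μ β A B (f θ₀) (f θ)) ∧
      LSD μ β A B (f θ₀) (f θ₀) = 0 := by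
  have hAB : A + B = 1 + β := by rw [hA, hB]; ring
  have h1β : (0 : ℝ) < 1 + β := by linarith
  -- notation for the integrals
  set I1 : Θ → ℝ≥0∞ := fun θ => ∫⁻ x, (f θ x : ℝ≥0∞) ^ (1 + β) ∂μ with hI1
  set I2 : Θ → ℝ≥0∞ := fun θ => ∫⁻ x, (f θ x : ℝ≥0∞) ^ B * (f θ₀ x : ℝ≥0∞) ^ A ∂μ with hI2
  have hI1ne : ∀ θ, I1 θ ≠ 0 ∧ I1 θ ≠ ⊤ :=
    fun θ => ⟨(hint1 θ).1.ne', (hint1 θ).2.ne⟩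
  have hI2ne : ∀ θ, I2 θ ≠ 0 ∧ I2 θ ≠ ⊤ :=
    fun θ => ⟨(hint2 θ θ₀).1.ne', (hint2 θ θ₀).2.ne⟩
  -- the value at θ₀ is zero
  have hzero : LSD μ β A B (f θ₀) (f θ₀) = 0 := by
    have hI2eq : (∫⁻ x, (f θ₀ x : ℝ≥0∞) ^ B * (f θ₀ x : ℝ≥0∞) ^ A ∂μ) = I1 θ₀ := by
      apply lintegral_congr_ae
      filter_upwards [hpos θ₀] with x hx
      have hxne : (f θ₀ x : ℝ≥0∞) ≠ 0 := by exact_mod_cast hx.ne'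
      rw [← ENNReal.rpow_add B A hxne ENNReal.coe_ne_top]
      congr 1; linarith
    have hco : 1 / A - (1 + β) / (A * B) + 1 / B = 0 := by
      field_simp
      linear_combination hAB
    simp only [LSD, hI2eq]
    have : (1 / A) * Real.log (I1 θ₀).toReal -
        ((1 + β) / (A * B)) * Real.log (I1 θ₀).toReal +
        (1 / B) * Real.log (I1 θ₀).toReal
        = (1 / A - (1 + β) / (A * B) + 1 / B) * Real.log (I1 θ₀).toReal := by ring
    rw [this, hco, zero_mul]
  -- the key Hölder-type inequality
  have key : ∀ θ : Θ, ((1 + β) / (A * B)) * Real.log (I2 θ).toReal ≤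
      (1 / A) * Real.log (I1 θ).toReal + (1 / B) * Real.log (I1 θ₀).toReal := by
    intro θ
    have hFm : Measurable fun x => (f θ x : ℝ≥0∞) := (hmeas θ).coe_nnreal_ennreal
    have hGm : Measurable fun x => (f θ₀ x : ℝ≥0∞) := (hmeas θ₀).coe_nnreal_ennreal
    rcases hA0.lt_or_gt with hAneg | hApos
    · -- A < 0, hence B > 1 + β > 0
      have hBpos : 0 < B := by linarith
      have hBgt : 1 + β < B := by linarith
      set p : ℝ := B / (1 + β) with hp
      set q : ℝ := B / (-A) with hq
      have hpq : p.HolderConjugate q := by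
        refine Real.holderConjugate_iff.mpr ⟨?_, ?_⟩
        · rw [hp, lt_div_iff₀ h1β]; linarith
        · rw [hp, hq, inv_div, inv_div, ← add_div, div_eq_one_iff_eq hBpos.ne']
          linarith
      set u : X → ℝ≥0∞ := fun x =>
        ((f θ x : ℝ≥0∞) ^ B * (f θ₀ x : ℝ≥0∞) ^ A) ^ ((1 + β) / B) with hu
      set v : X → ℝ≥0∞ := fun x => (f θ₀ x : ℝ≥0∞) ^ ((1 + β) * (-A) / B) with hv
      have hum : Measurable u := ((hFm.pow_const B).mul (hGm.pow_const A)).pow_const _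
      have hvm : Measurable v := hGm.pow_const _
      have holder := ENNReal.lintegral_mul_le_Lp_mul_Lq μ hpq hum.aemeasurable hvm.aemeasurable
      simp only [Pi.mul_apply] at holder
      have euv : (∫⁻ x, u x * v x ∂μ) = I1 θ := by
        apply lintegral_congr_ae
        filter_upwards [hpos θ₀] with x hx
        have hG0 : (f θ₀ x : ℝ≥0∞) ≠ 0 := by exact_mod_cast hx.ne'
        have hFB : (f θ x : ℝ≥0∞) ^ B ≠ ⊤ :=
          lsd_rpow_ne_top (fun _ => hBpos.le) ENNReal.coe_ne_top
        have hGA : (f θ₀ x : ℝ≥0∞) ^ A ≠ ⊤ :=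
          lsd_rpow_ne_top (fun h0 => absurd h0 hG0) ENNReal.coe_ne_top
        simp only [hu, hv]
        rw [ENNReal.mul_rpow_of_ne_top hFB hGA, ← ENNReal.rpow_mul, ← ENNReal.rpow_mul,
          mul_assoc, ← ENNReal.rpow_add _ _ hG0 ENNReal.coe_ne_top]
        have e0 : A * ((1 + β) / B) + (1 + β) * (-A) / B = 0 := by field_simp; ring
        have e1 : B * ((1 + β) / B) = 1 + β := by field_simp
        rw [e0, ENNReal.rpow_zero, mul_one, e1]
      have eu : (∫⁻ x, u x ^ p ∂μ) = I2 θ := by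
        apply lintegral_congr; intro x
        rw [hu, ← ENNReal.rpow_mul]
        have : (1 + β) / B * p = 1 := by rw [hp]; field_simp
        rw [this, ENNReal.rpow_one]
      have ev : (∫⁻ x, v x ^ q ∂μ) = I1 θ₀ := by
        apply lintegral_congr; intro x
        rw [hv, ← ENNReal.rpow_mul]
        congr 1
        rw [hq]; field_simp; try ring
      rw [euv, eu, ev] at holder
      have hlog := lsd_log_aux (hI1ne θ).1 (hI1ne θ).2 (hI2ne θ).1 (hI2ne θ).2
        (hI1ne θ₀).1 (hI1ne θ₀).2 holder
      have hps : 1 / p = (1 + β) / B := by rw [hp, one_div_div]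
      have hqs : 1 / q = -A / B := by rw [hq, one_div_div]; try ring
      rw [hps, hqs] at hlog
      have hAinv : (1 : ℝ) / A ≤ 0 := (one_div_neg.mpr hAneg).le
      have h2 := mul_le_mul_of_nonpos_left hlog hAinv
      have e2 : (1 / A) * ((1 + β) / B * Real.log (I2 θ).toReal +
          -A / B * Real.log (I1 θ₀).toReal)
          = ((1 + β) / (A * B)) * Real.log (I2 θ).toReal - (1 / B) * Real.log (I1 θ₀).toReal := by
        field_simp; ring
      rw [e2] at h2
      linarith
    rcases hB0.lt_or_gt with hBneg | hBpos
    · -- B < 0, hence A > 1 + β > 0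
      have hApos : 0 < A := by linarith
      have hAgt : 1 + β < A := by linarith
      set p : ℝ := A / (1 + β) with hp
      set q : ℝ := A / (-B) with hq
      have hpq : p.HolderConjugate q := by
        refine Real.holderConjugate_iff.mpr ⟨?_, ?_⟩
        · rw [hp, lt_div_iff₀ h1β]; linarith
        · rw [hp, hq, inv_div, inv_div, ← add_div, div_eq_one_iff_eq hApos.ne']
          linarith
      set u : X → ℝ≥0∞ := fun x =>
        ((f θ x : ℝ≥0∞) ^ B * (f θ₀ x : ℝ≥0∞) ^ A) ^ ((1 + β) / A) with hu
      set v : X → ℝ≥0∞ := fun x => (f θ x : ℝ≥0∞) ^ ((1 + β) * (-B) / A) with hv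
      have hum : Measurable u := ((hFm.pow_const B).mul (hGm.pow_const A)).pow_const _
      have hvm : Measurable v := hFm.pow_const _
      have holder := ENNReal.lintegral_mul_le_Lp_mul_Lq μ hpq hum.aemeasurable hvm.aemeasurable
      simp only [Pi.mul_apply] at holder
      have euv : (∫⁻ x, u x * v x ∂μ) = I1 θ₀ := by
        apply lintegral_congr_ae
        filter_upwards [hpos θ] with x hx
        have hF0 : (f θ x : ℝ≥0∞) ≠ 0 := by exact_mod_cast hx.ne'
        have hFB : (f θ x : ℝ≥0∞) ^ B ≠ ⊤ :=
          lsd_rpow_ne_top (fun h0 => absurd h0 hF0) ENNReal.coe_ne_top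
        have hGA : (f θ₀ x : ℝ≥0∞) ^ A ≠ ⊤ :=
          lsd_rpow_ne_top (fun _ => hApos.le) ENNReal.coe_ne_top
        simp only [hu, hv]
        rw [ENNReal.mul_rpow_of_ne_top hFB hGA, ← ENNReal.rpow_mul, ← ENNReal.rpow_mul,
          mul_right_comm, ← ENNReal.rpow_add _ _ hF0 ENNReal.coe_ne_top]
        have e0 : B * ((1 + β) / A) + (1 + β) * (-B) / A = 0 := by field_simp; ring
        have e1 : A * ((1 + β) / A) = 1 + β := by field_simp
        rw [e0, ENNReal.rpow_zero, e1, one_mul]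
      have eu : (∫⁻ x, u x ^ p ∂μ) = I2 θ := by
        apply lintegral_congr; intro x
        rw [hu, ← ENNReal.rpow_mul]
        have : (1 + β) / A * p = 1 := by rw [hp]; field_simp
        rw [this, ENNReal.rpow_one]
      have ev : (∫⁻ x, v x ^ q ∂μ) = I1 θ := by
        apply lintegral_congr; intro x
        rw [hv, ← ENNReal.rpow_mul]
        congr 1
        rw [hq]; field_simp; try ring
      rw [euv, eu, ev] at holder
      have hlog := lsd_log_aux (hI1ne θ₀).1 (hI1ne θ₀).2 (hI2ne θ).1 (hI2ne θ).2
        (hI1ne θ).1 (hI1ne θ).2 holder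
      have hps : 1 / p = (1 + β) / A := by rw [hp, one_div_div]
      have hqs : 1 / q = -B / A := by rw [hq, one_div_div]; try ring
      rw [hps, hqs] at hlog
      have hBinv : (1 : ℝ) / B ≤ 0 := (one_div_neg.mpr hBneg).le
      have h2 := mul_le_mul_of_nonpos_left hlog hBinv
      have e2 : (1 / B) * ((1 + β) / A * Real.log (I2 θ).toReal +
          -B / A * Real.log (I1 θ).toReal)
          = ((1 + β) / (A * B)) * Real.log (I2 θ).toReal - (1 / A) * Real.log (I1 θ).toReal := by
        field_simp; ring
      rw [e2] at h2
      linarith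
    · -- A > 0 and B > 0 : direct Hölder
      have hApos : 0 < A := by linarith
      set p : ℝ := (1 + β) / B with hp
      set q : ℝ := (1 + β) / A with hq
      have hpq : p.HolderConjugate q := by
        refine Real.holderConjugate_iff.mpr ⟨?_, ?_⟩
        · rw [hp, lt_div_iff₀ hBpos]; linarith
        · rw [hp, hq, inv_div, inv_div, ← add_div, div_eq_one_iff_eq h1β.ne']
          linarith
      set u : X → ℝ≥0∞ := fun x => (f θ x : ℝ≥0∞) ^ B with hu
      set v : X → ℝ≥0∞ := fun x => (f θ₀ x : ℝ≥0∞) ^ A with hv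
      have hum : Measurable u := hFm.pow_const B
      have hvm : Measurable v := hGm.pow_const A
      have holder := ENNReal.lintegral_mul_le_Lp_mul_Lq μ hpq hum.aemeasurable hvm.aemeasurable
      simp only [Pi.mul_apply] at holder
      have euv : (∫⁻ x, u x * v x ∂μ) = I2 θ := rfl
      have eu : (∫⁻ x, u x ^ p ∂μ) = I1 θ := by
        apply lintegral_congr; intro x
        rw [hu, ← ENNReal.rpow_mul]
        congr 1
        rw [hp]; field_simp
      have ev : (∫⁻ x, v x ^ q ∂μ) = I1 θ₀ := by
        apply lintegral_congr; intro x
        rw [hv, ← ENNReal.rpow_mul]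
        congr 1
        rw [hq]; field_simp; try ring
      rw [euv, eu, ev] at holder
      have hlog := lsd_log_aux (hI2ne θ).1 (hI2ne θ).2 (hI1ne θ).1 (hI1ne θ).2
        (hI1ne θ₀).1 (hI1ne θ₀).2 holder
      have hps : 1 / p = B / (1 + β) := by rw [hp, one_div_div]
      have hqs : 1 / q = A / (1 + β) := by rw [hq, one_div_div]
      rw [hps, hqs] at hlog
      have hc : (0 : ℝ) < (1 + β) / (A * B) := div_pos h1β (mul_pos hApos hBpos)
      have h2 := mul_le_mul_of_nonneg_left hlog hc.le
      have e2 : ((1 + β) / (A * B)) * (B / (1 + β) * Real.log (I1 θ).toReal +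
          A / (1 + β) * Real.log (I1 θ₀).toReal)
          = (1 / A) * Real.log (I1 θ).toReal + (1 / B) * Real.log (I1 θ₀).toReal := by
        field_simp
      rw [e2] at h2
      exact h2
  refine ⟨fun θ => ?_, hzero⟩
  rw [hzero]
  have hk := key θ
  simp only [LSD]
  linarith
end
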